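/- For n ≥ 2, the digraph C_n^⊥⊤ obtained from the directed n-cycle by adjoining a total source ⊥ and total sink ⊤ has a majority polymorphism. Concretely, extend the majority polymorphism m of C_n (which returns the middle/majority rule on the cycle) to m' on C_n ∪ {⊥,⊤} by: m'(a,b,c) = m(a,b,c) if a,b,c all lie in C_n; m'(a,b,c) = the repeated value if two of a,b,c coincide; m'(a,b,c) = ⊥ if a,b,c are pairwise distinct and ⊥ ∈ {a,b,c}; and m'(a,b,c) = ⊤ if a,b,c are pairwise distinct, not all in C_n, and ⊥ ∉ {a,b,c}. Then m' is a majority polymorphism of C_n^⊥⊤. -/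

import Mathlib

/-- For `n ≥ 2`, the digraph `C_n^⊥⊤` (the directed `n`-cycle with a total source `⊥`
and total sink `⊤` adjoined, modelled on `ZMod n ⊕ Bool` with `Sum.inr false = ⊥`
and `Sum.inr true = ⊤`) has a majority polymorphism; concretely, the extension `m'`
of the majority polymorphism `m` of `C_n` described below is one. -/
theorem stmt_18 (n : ℕ) (hn : 2 ≤ n)
    (E₂ : ZMod n ⊕ Bool → ZMod n ⊕ Bool → Prop)
    (hE₂ : ∀ x y : ZMod n ⊕ Bool, E₂ x y ↔
      ((∃ u v : ZMod n, x = Sum.inl u ∧ y = Sum.inl v ∧ v = u + 1) ∨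
       (x = Sum.inr false ∧ y ≠ Sum.inr false) ∨
       (y = Sum.inr true ∧ x ≠ Sum.inr true)))
    -- the majority polymorphism m of C_n
    (m : ZMod n → ZMod n → ZMod n → ZMod n)
    (hm : ∀ a b c : ZMod n, m a b c =
      if (a = b ∧ b = c) ∨ (a ≠ b ∧ b ≠ c ∧ a ≠ c) then a
      else if a = b then a else if b = c then b else a)
    -- the extension m' of m to C_n^⊥⊤
    (m' : ZMod n ⊕ Bool → ZMod n ⊕ Bool → ZMod n ⊕ Bool → ZMod n ⊕ Bool)
    (hm'cyc : ∀ a b c : ZMod n,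
      m' (Sum.inl a) (Sum.inl b) (Sum.inl c) = Sum.inl (m a b c))
    (hm'maj : ∀ x y : ZMod n ⊕ Bool, m' x x y = x ∧ m' x y x = x ∧ m' y x x = x)
    (hm'bot : ∀ a b c : ZMod n ⊕ Bool, a ≠ b → b ≠ c → a ≠ c →
      (a = Sum.inr false ∨ b = Sum.inr false ∨ c = Sum.inr false) →
      m' a b c = Sum.inr false)
    (hm'top : ∀ a b c : ZMod n ⊕ Bool, a ≠ b → b ≠ c → a ≠ c →
      ¬ (∃ a' b' c' : ZMod n, a = Sum.inl a' ∧ b = Sum.inl b' ∧ c = Sum.inl c') →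
      (a ≠ Sum.inr false ∧ b ≠ Sum.inr false ∧ c ≠ Sum.inr false) →
      m' a b c = Sum.inr true) :
    (∀ a₁ a₂ a₃ b₁ b₂ b₃, E₂ a₁ b₁ → E₂ a₂ b₂ → E₂ a₃ b₃ →
      E₂ (m' a₁ a₂ a₃) (m' b₁ b₂ b₃)) ∧
    (∀ x y : ZMod n ⊕ Bool, m' y x x = x ∧ m' x y x = x ∧ m' x x y = x) := by
  constructor
  · intro a₁ a₂ a₃ b₁ b₂ b₃ h₁ h₂ h₃
    have hbne : ∀ {a b : ZMod n ⊕ Bool}, E₂ a b → b ≠ Sum.inr false := by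
      intro a b h hb
      rcases (hE₂ a b).mp h with ⟨u, v, _, hv, _⟩ | ⟨_, hb'⟩ | ⟨hb', _⟩
      · rw [hb] at hv; exact absurd hv Sum.inr_ne_inl
      · exact hb' hb
      · rw [hb] at hb'; simp at hb'
    have hane : ∀ {a b : ZMod n ⊕ Bool}, E₂ a b → a ≠ Sum.inr true := by
      intro a b h ha
      rcases (hE₂ a b).mp h with ⟨u, v, hu, _, _⟩ | ⟨ha', _⟩ | ⟨_, ha'⟩
      · rw [ha] at hu; exact absurd hu Sum.inr_ne_inl
      · rw [ha] at ha'; simp at ha'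
      · exact ha' ha
    have hcyc : ∀ u v : ZMod n, E₂ (Sum.inl u) (Sum.inl v) → v = u + 1 := by
      intro u v h
      rcases (hE₂ _ _).mp h with ⟨p, q, hp, hq, hpq⟩ | ⟨hp, _⟩ | ⟨hq, _⟩
      · obtain rfl : u = p := Sum.inl.inj hp
        obtain rfl : v = q := Sum.inl.inj hq
        exact hpq
      · exact absurd hp Sum.inl_ne_inr
      · exact absurd hq Sum.inl_ne_inr
    have hto : ∀ (a : ZMod n ⊕ Bool) (v : ZMod n), E₂ a (Sum.inl v) →
        a = Sum.inr false ∨ a = Sum.inl (v - 1) := by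
      intro a v h
      rcases (hE₂ _ _).mp h with ⟨p, q, hp, hq, hpq⟩ | ⟨hp, _⟩ | ⟨hq, _⟩
      · right
        obtain rfl : v = q := Sum.inl.inj hq
        rw [hp, hpq]; simp
      · exact Or.inl hp
      · exact absurd hq Sum.inl_ne_inr
    have hrep1 : ∀ x y : ZMod n ⊕ Bool, m' x x y = x := fun x y => (hm'maj x y).1
    have hrep2 : ∀ x y : ZMod n ⊕ Bool, m' x y x = x := fun x y => (hm'maj x y).2.1
    have hrep3 : ∀ x y : ZMod n ⊕ Bool, m' x y y = y := fun x y => (hm'maj y x).2.2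
    have no_bot : ∀ x y z : ZMod n ⊕ Bool, x ≠ Sum.inr false → y ≠ Sum.inr false →
        z ≠ Sum.inr false → m' x y z ≠ Sum.inr false := by
      intro x y z hx hy hz
      by_cases hxy : x = y
      · rw [hxy, hrep1]; exact hy
      by_cases hyz : y = z
      · rw [hyz, hrep3]; exact hz
      by_cases hxz : x = z
      · rw [hxz, hrep2]; exact hz
      by_cases hall : ∃ p q r : ZMod n, x = Sum.inl p ∧ y = Sum.inl q ∧ z = Sum.inl r
      · obtain ⟨p, q, r, rfl, rfl, rfl⟩ := hall
        rw [hm'cyc]; simp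
      · rw [hm'top x y z hxy hyz hxz hall ⟨hx, hy, hz⟩]; simp
    have no_top : ∀ x y z : ZMod n ⊕ Bool, x ≠ Sum.inr true → y ≠ Sum.inr true →
        z ≠ Sum.inr true → m' x y z ≠ Sum.inr true := by
      intro x y z hx hy hz
      by_cases hxy : x = y
      · rw [hxy, hrep1]; exact hy
      by_cases hyz : y = z
      · rw [hyz, hrep3]; exact hz
      by_cases hxz : x = z
      · rw [hxz, hrep2]; exact hz
      by_cases hall : ∃ p q r : ZMod n, x = Sum.inl p ∧ y = Sum.inl q ∧ z = Sum.inl r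
      · obtain ⟨p, q, r, rfl, rfl, rfl⟩ := hall
        rw [hm'cyc]; simp
      · have hbot : x = Sum.inr false ∨ y = Sum.inr false ∨ z = Sum.inr false := by
          rcases x with p | (_ | _)
          · rcases y with q | (_ | _)
            · rcases z with r | (_ | _)
              · exact absurd ⟨p, q, r, rfl, rfl, rfl⟩ hall
              · exact Or.inr (Or.inr rfl)
              · exact absurd rfl hz
            · exact Or.inr (Or.inl rfl)
            · exact absurd rfl hy
          · exact Or.inl rfl
          · exact absurd rfl hx
        rw [hm'bot x y z hxy hyz hxz hbot]; simp
    have hshift : ∀ x y z : ZMod n, m (x + 1) (y + 1) (z + 1) = m x y z + 1 := by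
      intro x y z
      rw [hm, hm]
      simp only [ne_eq, add_left_inj]
      split_ifs <;> rfl
    have char : ∀ (x y z : ZMod n ⊕ Bool) (t : ZMod n),
        ((x ≠ Sum.inr false ∧ y ≠ Sum.inr false ∧ z ≠ Sum.inr false) ∨
         (x ≠ Sum.inr true ∧ y ≠ Sum.inr true ∧ z ≠ Sum.inr true)) →
        m' x y z = Sum.inl t →
        (x = y ∧ x = Sum.inl t) ∨ (y = z ∧ y = Sum.inl t) ∨ (x = z ∧ x = Sum.inl t) ∨
        (∃ p q r : ZMod n, x = Sum.inl p ∧ y = Sum.inl q ∧ z = Sum.inl r ∧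
          p ≠ q ∧ q ≠ r ∧ p ≠ r ∧ m p q r = t) := by
      intro x y z t hside hmeq
      by_cases hxy : x = y
      · refine Or.inl ⟨hxy, ?_⟩
        rw [hxy] at hmeq ⊢; rw [hrep1] at hmeq; exact hmeq
      by_cases hyz : y = z
      · refine Or.inr (Or.inl ⟨hyz, ?_⟩)
        rw [hyz] at hmeq ⊢; rw [hrep3] at hmeq; exact hmeq
      by_cases hxz : x = z
      · refine Or.inr (Or.inr (Or.inl ⟨hxz, ?_⟩))
        rw [hxz] at hmeq ⊢; rw [hrep2] at hmeq; exact hmeq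
      by_cases hall : ∃ p q r : ZMod n, x = Sum.inl p ∧ y = Sum.inl q ∧ z = Sum.inl r
      · obtain ⟨p, q, r, rfl, rfl, rfl⟩ := hall
        rw [hm'cyc] at hmeq
        refine Or.inr (Or.inr (Or.inr ⟨p, q, r, rfl, rfl, rfl, ?_, ?_, ?_, Sum.inl.inj hmeq⟩))
        · exact fun h => hxy (by rw [h])
        · exact fun h => hyz (by rw [h])
        · exact fun h => hxz (by rw [h])
      · exfalso
        rcases hside with ⟨hx, hy, hz⟩ | ⟨hx, hy, hz⟩
        · rw [hm'top x y z hxy hyz hxz hall ⟨hx, hy, hz⟩] at hmeq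
          exact absurd hmeq Sum.inr_ne_inl
        · have hbot : x = Sum.inr false ∨ y = Sum.inr false ∨ z = Sum.inr false := by
            rcases x with p | (_ | _)
            · rcases y with q | (_ | _)
              · rcases z with r | (_ | _)
                · exact absurd ⟨p, q, r, rfl, rfl, rfl⟩ hall
                · exact Or.inr (Or.inr rfl)
                · exact absurd rfl hz
              · exact Or.inr (Or.inl rfl)
              · exact absurd rfl hy
            · exact Or.inl rfl
            · exact absurd rfl hx
          rw [hm'bot x y z hxy hyz hxz hbot] at hmeq
          exact absurd hmeq Sum.inr_ne_inl
    have hwnb : m' b₁ b₂ b₃ ≠ Sum.inr false := no_bot _ _ _ (hbne h₁) (hbne h₂) (hbne h₃)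
    have hvnt : m' a₁ a₂ a₃ ≠ Sum.inr true := no_top _ _ _ (hane h₁) (hane h₂) (hane h₃)
    by_cases hvb : m' a₁ a₂ a₃ = Sum.inr false
    · exact (hE₂ _ _).mpr (Or.inr (Or.inl ⟨hvb, hwnb⟩))
    by_cases hwt : m' b₁ b₂ b₃ = Sum.inr true
    · exact (hE₂ _ _).mpr (Or.inr (Or.inr ⟨hwt, hvnt⟩))
    obtain ⟨u, hveq⟩ : ∃ u, m' a₁ a₂ a₃ = Sum.inl u := by
      rcases hv : m' a₁ a₂ a₃ with u | (_ | _)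
      · exact ⟨u, rfl⟩
      · exact absurd hv hvb
      · exact absurd hv hvnt
    obtain ⟨u', hweq⟩ : ∃ u', m' b₁ b₂ b₃ = Sum.inl u' := by
      rcases hw : m' b₁ b₂ b₃ with u' | (_ | _)
      · exact ⟨u', rfl⟩
      · exact absurd hw hwnb
      · exact absurd hw hwt
    suffices hu : u' = u + 1 by
      exact (hE₂ _ _).mpr (Or.inl ⟨u, u', hveq, hweq, hu⟩)
    have charV := char a₁ a₂ a₃ u (Or.inr ⟨hane h₁, hane h₂, hane h₃⟩) hveq
    have charW := char b₁ b₂ b₃ u' (Or.inl ⟨hbne h₁, hbne h₂, hbne h₃⟩) hweq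
    have solve : ∀ ai : ZMod n ⊕ Bool, ai = Sum.inl u → E₂ ai (Sum.inl u') → u' = u + 1 := by
      intro ai hai hE
      rw [hai] at hE
      exact hcyc u u' hE
    have unbot : ∀ ai : ZMod n ⊕ Bool, ∀ p : ZMod n, ai = Sum.inl p →
        (ai = Sum.inr false ∨ ai = Sum.inl (u' - 1)) → p = u' - 1 := by
      intro ai p hp hd
      rw [hp] at hd
      rcases hd with h | h
      · exact absurd h Sum.inl_ne_inr
      · exact Sum.inl.inj h
    rcases charW with ⟨hb12, hbv⟩ | ⟨hb23, hbv⟩ | ⟨hb13, hbv⟩ |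
      ⟨y₁, y₂, y₃, hy1, hy2, hy3, hy12, hy23, hy13, hmy⟩
    · -- b₁ = b₂ = inl u'
      have e₁ : E₂ a₁ (Sum.inl u') := by rw [← hbv]; exact h₁
      have e₂ : E₂ a₂ (Sum.inl u') := by rw [← hbv, hb12]; exact h₂
      rcases charV with ⟨_, ha⟩ | ⟨h23a, ha⟩ | ⟨h13a, ha⟩ |
        ⟨x₁, x₂, x₃, hx1, hx2, hx3, hx12, _, _, _⟩
      · exact solve a₁ ha e₁
      · exact solve a₂ ha e₂
      · exact solve a₁ ha e₁
      · exact absurd ((unbot a₁ x₁ hx1 (hto a₁ u' e₁)).trans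
          (unbot a₂ x₂ hx2 (hto a₂ u' e₂)).symm) hx12
    · -- b₂ = b₃ = inl u'
      have e₂ : E₂ a₂ (Sum.inl u') := by rw [← hbv]; exact h₂
      have e₃ : E₂ a₃ (Sum.inl u') := by rw [← hbv, hb23]; exact h₃
      rcases charV with ⟨h12a, ha⟩ | ⟨h23a, ha⟩ | ⟨h13a, ha⟩ |
        ⟨x₁, x₂, x₃, hx1, hx2, hx3, _, hx23, _, _⟩
      · exact solve a₂ (h12a.symm.trans ha) e₂
      · exact solve a₂ ha e₂
      · exact solve a₃ (h13a.symm.trans ha) e₃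
      · exact absurd ((unbot a₂ x₂ hx2 (hto a₂ u' e₂)).trans
          (unbot a₃ x₃ hx3 (hto a₃ u' e₃)).symm) hx23
    · -- b₁ = b₃ = inl u'
      have e₁ : E₂ a₁ (Sum.inl u') := by rw [← hbv]; exact h₁
      have e₃ : E₂ a₃ (Sum.inl u') := by rw [← hbv, hb13]; exact h₃
      rcases charV with ⟨h12a, ha⟩ | ⟨h23a, ha⟩ | ⟨h13a, ha⟩ |
        ⟨x₁, x₂, x₃, hx1, hx2, hx3, _, _, hx13, _⟩
      · exact solve a₁ ha e₁
      · exact solve a₃ (h23a.symm.trans ha) e₃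
      · exact solve a₁ ha e₁
      · exact absurd ((unbot a₁ x₁ hx1 (hto a₁ u' e₁)).trans
          (unbot a₃ x₃ hx3 (hto a₃ u' e₃)).symm) hx13
    · -- all b's are inl and pairwise distinct
      rcases charV with ⟨h12a, ha⟩ | ⟨h23a, ha⟩ | ⟨h13a, ha⟩ |
        ⟨x₁, x₂, x₃, hx1, hx2, hx3, _, _, _, hmx⟩
      · have e₁ : E₂ (Sum.inl u) (Sum.inl y₁) := by rw [← ha, ← hy1]; exact h₁
        have e₂ : E₂ (Sum.inl u) (Sum.inl y₂) := by
          rw [← h12a.symm.trans ha, ← hy2]; exact h₂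
        exact absurd ((hcyc _ _ e₁).trans (hcyc _ _ e₂).symm) hy12
      · have e₂ : E₂ (Sum.inl u) (Sum.inl y₂) := by rw [← ha, ← hy2]; exact h₂
        have e₃ : E₂ (Sum.inl u) (Sum.inl y₃) := by
          rw [← h23a.symm.trans ha, ← hy3]; exact h₃
        exact absurd ((hcyc _ _ e₂).trans (hcyc _ _ e₃).symm) hy23
      · have e₁ : E₂ (Sum.inl u) (Sum.inl y₁) := by rw [← ha, ← hy1]; exact h₁
        have e₃ : E₂ (Sum.inl u) (Sum.inl y₃) := by
          rw [← h13a.symm.trans ha, ← hy3]; exact h₃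
        exact absurd ((hcyc _ _ e₁).trans (hcyc _ _ e₃).symm) hy13
      · have c₁ : y₁ = x₁ + 1 := hcyc x₁ y₁ (by rw [← hx1, ← hy1]; exact h₁)
        have c₂ : y₂ = x₂ + 1 := hcyc x₂ y₂ (by rw [← hx2, ← hy2]; exact h₂)
        have c₃ : y₃ = x₃ + 1 := hcyc x₃ y₃ (by rw [← hx3, ← hy3]; exact h₃)
        rw [← hmy, c₁, c₂, c₃, hshift, hmx]
  · intro x y
    exact ⟨(hm'maj x y).2.2, (hm'maj x y).2.1, (hm'maj x y).1⟩
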